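/- The weight-6 multiple zeta values satisfy 24ζ(1,5) = 12ζ(2,1,1,2) − 7ζ(1,1,1,1,2), 4ζ(2,4) = −4ζ(2,1,1,2) + 3ζ(1,1,1,1,2) (with sign convention: −4ζ(2,4) − 4ζ(2,1,1,2) + 3ζ(1,1,1,1,2) = 0), and ζ(4,2) = ζ(2,1,1,2). -/

import Mathlib

open scoped ENNReal BigOperators
open ENNReal
noncomputable section



/-- atom: `(n^k)⁻¹` as an extended nonneg real -/
def iv (n k : ℕ) : ℝ≥0∞ := ENNReal.ofReal (((n : ℝ) ^ k)⁻¹)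

/-- connector `1/((a+b).choose b)` -/
def chE (a b : ℕ) : ℝ≥0∞ := ENNReal.ofReal ((((a + b).choose b : ℕ) : ℝ))⁻¹

lemma iv_ne_top (n k : ℕ) : iv n k ≠ ⊤ := ofReal_ne_top
lemma chE_ne_top (a b : ℕ) : chE a b ≠ ⊤ := ofReal_ne_top

lemma iv_mul (n a b : ℕ) : iv n a * iv n b = iv n (a + b) := by
  rw [iv, iv, iv, ← ENNReal.ofReal_mul (by positivity)]
  congr 1
  rw [pow_add, mul_inv]

lemma chE_symm (a b : ℕ) : chE a b = chE b a := by
  rw [chE, chE, Nat.add_comm b a, Nat.choose_symm_add]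

lemma chE_zero_left (b : ℕ) : chE 0 b = 1 := by
  simp [chE]

def eN : ℕ ≃ ℕ+ := ⟨Nat.succPNat, PNat.natPred, Nat.natPred_succPNat, PNat.succPNat_natPred⟩

lemma tsum_pnat (f : ℕ+ → ℝ≥0∞) : ∑' m : ℕ+, f m = ∑' n : ℕ, f n.succPNat :=
  (eN.tsum_eq f).symm

lemma reidxN (j : ℕ) (h : ℕ → ℝ≥0∞) :
    ∑' n : ℕ, (if j < n then h n else 0) = ∑' y : ℕ, h (j + 1 + y) := by
  have h1 : ∑' n : {n : ℕ | j < n}, h n = ∑' n : ℕ, (if j < n then h n else 0) := by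
    rw [tsum_subtype]
    refine tsum_congr fun n => ?_
    by_cases hn : j < n <;> simp [Set.indicator, hn]
  rw [← h1]
  exact ((Equiv.ofBijective
      (fun y : ℕ => (⟨j + 1 + y, show j < j + 1 + y by omega⟩ : {n : ℕ | j < n}))
      ⟨fun a b hab => by simpa using congrArg (fun x => x.1 - (j+1)) hab,
       fun ⟨n, hn⟩ => ⟨n - (j+1), by
         have : j < n := hn
         exact Subtype.ext (by simp; omega)⟩⟩).tsum_eq (fun n => h n)).symm

def cr (a b : ℕ) : ℝ := ((((a + b).choose b : ℕ) : ℝ))⁻¹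

lemma cr_pos (a b : ℕ) : 0 < cr a b := by
  have := Nat.choose_pos (show b ≤ a + b by omega)
  rw [cr]
  positivity

lemma nat_key (n y : ℕ) (hn : 1 ≤ n) :
    (n + y) * ((n - 1 + y).choose y) = n * ((n + y).choose y) := by
  obtain ⟨m, rfl⟩ : ∃ m, n = m + 1 := ⟨n - 1, by omega⟩
  have h1 := Nat.add_one_mul_choose_eq (m + y) m
  -- (m+y+1) * choose (m+y) m = choose (m+y+1) (m+1) * (m+1)
  have h2 : (m + y).choose m = (m + y).choose y := by
    rw [Nat.choose_symm_add]
  have h3 : (m + 1 + y).choose (m + 1) = (m + 1 + y).choose y := by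
    have : m + 1 + y = (m + 1) + y := rfl
    rw [this, Nat.choose_symm_add]
  have : m + 1 - 1 + y = m + y := by omega
  rw [this, ← h2, ← h3]
  have : m + 1 + y = m + y + 1 := by omega
  rw [this]
  linarith [h1]

lemma cr_step (n y : ℕ) (hn : 1 ≤ n) (hy : 1 ≤ y) :
    (↑n)⁻¹ * cr n y = (↑y)⁻¹ * (cr (n - 1) y - cr n y) := by
  have hkey := nat_key n y hn
  have hkey' : ((n : ℝ) + y) * ((n - 1 + y).choose y : ℕ) = (n : ℝ) * ((n + y).choose y : ℕ) := by
    exact_mod_cast hkey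
  set a := (((n - 1 + y).choose y : ℕ) : ℝ) with ha
  set b := (((n + y).choose y : ℕ) : ℝ) with hb
  have hb0 : b ≠ 0 := by
    have : 0 < (n + y).choose y := Nat.choose_pos (by omega)
    rw [hb]; exact_mod_cast this.ne'
  have hn0 : (n : ℝ) ≠ 0 := by
    have : (0:ℝ) < n := by exact_mod_cast hn
    exact this.ne'
  have hy0 : (y : ℝ) ≠ 0 := by
    have : (0:ℝ) < y := by exact_mod_cast hy
    exact this.ne'
  have hny : (n : ℝ) + (y:ℝ) ≠ 0 := by
    have : (0:ℝ) < n := by exact_mod_cast hn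
    have h2 : (0:ℝ) ≤ y := by positivity
    nlinarith
  have hA : a = ↑n * b / (↑n + ↑y) := by
    rw [eq_div_iff hny]; linarith [hkey']
  rw [cr, cr, ← ha, ← hb, hA]
  field_simp
  ring

lemma succ_le_choose (a b : ℕ) (hb : 1 ≤ b) : a + 1 ≤ (a + b).choose b := by
  induction b with
  | zero => omega
  | succ b ih =>
    rcases Nat.eq_or_lt_of_le hb with h | h
    · simp [← h]
    · have hb1 : 1 ≤ b := by omega
      have : a + (b + 1) = (a + b) + 1 := by omega
      rw [this, Nat.choose_succ_succ']
      have := ih hb1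
      omega

lemma cr_tendsto (x y : ℕ) (hy : 1 ≤ y) :
    Filter.Tendsto (fun N : ℕ => cr (x + N) y) Filter.atTop (nhds 0) := by
  apply squeeze_zero (fun N => (cr_pos _ _).le) (g := fun N : ℕ => ((x : ℝ) + N + 1)⁻¹)
  · intro N
    rw [cr]
    have h1 : x + N + 1 ≤ (x + N + y).choose y := succ_le_choose (x + N) y hy
    have h2 : (0:ℝ) < (x:ℝ) + N + 1 := by positivity
    have h3 : ((x:ℝ) + N + 1) ≤ (((x + N + y).choose y : ℕ) : ℝ) := by exact_mod_cast h1
    exact inv_anti₀ h2 h3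
  · have : Filter.Tendsto (fun N : ℕ => ((N : ℝ) + ((x : ℝ) + 1))⁻¹) Filter.atTop (nhds 0) :=
      tendsto_inv_atTop_zero.comp (Filter.tendsto_atTop_add_const_right _ _ tendsto_natCast_atTop_atTop)
    refine this.congr fun N => by ring_nf

def crF (x y : ℕ) (j : ℕ) : ℝ := (((x + j + 1 : ℕ) : ℝ))⁻¹ * cr (x + j + 1) y

lemma crF_nonneg (x y j : ℕ) : 0 ≤ crF x y j := by
  have := cr_pos (x + j + 1) y
  rw [crF]; positivity

lemma crF_partial (x y : ℕ) (hy : 1 ≤ y) (N : ℕ) :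
    ∑ j ∈ Finset.range N, crF x y j = (y : ℝ)⁻¹ * (cr x y - cr (x + N) y) := by
  induction N with
  | zero => simp
  | succ N ih =>
    rw [Finset.sum_range_succ, ih]
    have hstep := cr_step (x + N + 1) y (by omega) hy
    have h1 : x + N + 1 - 1 = x + N := by omega
    rw [h1] at hstep
    rw [crF]
    have h2 : x + (N + 1) = x + N + 1 := by omega
    rw [h2]
    rw [hstep]
    ring

lemma crF_hasSum (x y : ℕ) (hy : 1 ≤ y) :
    HasSum (crF x y) ((y : ℝ)⁻¹ * cr x y) := by
  rw [hasSum_iff_tendsto_nat_of_nonneg (crF_nonneg x y)]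
  have h1 : (fun N : ℕ => ∑ j ∈ Finset.range N, crF x y j)
      = fun N : ℕ => (y : ℝ)⁻¹ * (cr x y - cr (x + N) y) := by
    funext N; exact crF_partial x y hy N
  rw [h1]
  have h2 : Filter.Tendsto (fun N : ℕ => (y : ℝ)⁻¹ * (cr x y - cr (x + N) y))
      Filter.atTop (nhds ((y : ℝ)⁻¹ * (cr x y - 0))) :=
    (tendsto_const_nhds.sub (cr_tendsto x y hy)).const_mul _
  simpa using h2

/-- Seki–Yamamoto transport lemma -/
lemma KL (x : ℕ) (y : ℕ+) :
    ∑' j : ℕ+, iv (x + (j : ℕ)) 1 * chE (x + (j : ℕ)) y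
      = iv (y : ℕ) 1 * chE x (y : ℕ) := by
  have hy : 1 ≤ (y : ℕ) := y.one_le
  rw [tsum_pnat]
  have h1 : ∀ n : ℕ, iv (x + ((n.succPNat : ℕ+) : ℕ)) 1 * chE (x + ((n.succPNat : ℕ+) : ℕ)) y
      = ENNReal.ofReal (crF x y n) := by
    intro n
    have hc : ((n.succPNat : ℕ+) : ℕ) = n + 1 := rfl
    rw [hc, iv, chE, crF, pow_one, ← ENNReal.ofReal_mul (by positivity)]
    congr 2 <;> omega
  rw [tsum_congr h1, ← ENNReal.ofReal_tsum_of_nonneg (crF_nonneg x y) (crF_hasSum x y hy).summable,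
    (crF_hasSum x y hy).tsum_eq, ENNReal.ofReal_mul (by positivity), iv, chE, pow_one, cr]

/-! ### Connected sums and duality chains -/

def Q (k : ℕ) (x : ℕ) : ℝ≥0∞ := ∑' g : ℕ+, iv (g : ℕ) k * chE x (g : ℕ)

lemma Qbase (x : ℕ+) : Q 1 (x : ℕ) = iv (x : ℕ) 1 := by
  have h := KL 0 x
  simp only [Nat.zero_add, chE_zero_left, mul_one] at h
  rw [Q, ← h]
  refine tsum_congr fun g => ?_
  rw [chE_symm]

lemma QstepA (k x : ℕ) :
    Q (k + 1) x = ∑' j : ℕ+, iv (x + (j : ℕ)) 1 * Q k (x + (j : ℕ)) := by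
  rw [Q]
  have h1 : ∀ g : ℕ+, iv (g : ℕ) (k + 1) * chE x (g : ℕ)
      = iv (g : ℕ) k * ∑' j : ℕ+, iv (x + (j : ℕ)) 1 * chE (x + (j : ℕ)) (g : ℕ) := by
    intro g
    rw [KL x g, ← mul_assoc, iv_mul]
  rw [tsum_congr h1]
  have h2 : ∀ g : ℕ+, iv (g : ℕ) k * ∑' j : ℕ+, iv (x + (j : ℕ)) 1 * chE (x + (j : ℕ)) (g : ℕ)
      = ∑' j : ℕ+, iv (x + (j : ℕ)) 1 * (iv (g : ℕ) k * chE (x + (j : ℕ)) (g : ℕ)) := by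
    intro g
    rw [← ENNReal.tsum_mul_left]
    exact tsum_congr fun j => by ring
  rw [tsum_congr h2, ENNReal.tsum_comm]
  exact tsum_congr fun j => ENNReal.tsum_mul_left

def U (k : ℕ) (x : ℕ) : ℝ≥0∞ :=
  ∑' g1 : ℕ+, iv (g1 : ℕ) 4 * ∑' g2 : ℕ+, iv ((g1 : ℕ) + (g2 : ℕ)) k * chE x ((g1 : ℕ) + (g2 : ℕ))

lemma UstepA (k x : ℕ) :
    U (k + 1) x = ∑' j : ℕ+, iv (x + (j : ℕ)) 1 * U k (x + (j : ℕ)) := by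
  rw [U]
  have h1 : ∀ g1 g2 : ℕ+, iv ((g1:ℕ) + (g2:ℕ)) (k + 1) * chE x ((g1:ℕ) + (g2:ℕ))
      = ∑' j : ℕ+, iv (x + (j : ℕ)) 1 *
          (iv ((g1:ℕ) + (g2:ℕ)) k * chE (x + (j : ℕ)) ((g1:ℕ) + (g2:ℕ))) := by
    intro g1 g2
    have hK := KL x (g1 + g2)
    have hc : ((g1 + g2 : ℕ+) : ℕ) = (g1:ℕ) + (g2:ℕ) := rfl
    rw [hc] at hK
    rw [← iv_mul, mul_assoc, ← hK, ← ENNReal.tsum_mul_left]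
    exact tsum_congr fun j => by ring
  calc ∑' g1 : ℕ+, iv (g1 : ℕ) 4 *
        ∑' g2 : ℕ+, iv ((g1:ℕ)+(g2:ℕ)) (k+1) * chE x ((g1:ℕ)+(g2:ℕ))
      = ∑' (g1 : ℕ+) (j : ℕ+), iv (x + (j:ℕ)) 1 * (iv (g1 : ℕ) 4 *
          ∑' g2 : ℕ+, iv ((g1:ℕ)+(g2:ℕ)) k * chE (x + (j:ℕ)) ((g1:ℕ)+(g2:ℕ))) := by
        refine tsum_congr fun g1 => ?_
        rw [tsum_congr (h1 g1), ENNReal.tsum_comm (f := fun (g2 j : ℕ+) => iv (x + (j : ℕ)) 1 *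
          (iv ((g1:ℕ) + (g2:ℕ)) k * chE (x + (j : ℕ)) ((g1:ℕ) + (g2:ℕ))))]
        rw [← ENNReal.tsum_mul_left]
        refine tsum_congr fun j => ?_
        rw [ENNReal.tsum_mul_left]
        ring
    _ = ∑' j : ℕ+, iv (x + (j : ℕ)) 1 * U k (x + (j : ℕ)) := by
        rw [ENNReal.tsum_comm]
        exact tsum_congr fun j => by rw [ENNReal.tsum_mul_left]; rfl

lemma UstepB (x : ℕ+) : U 1 (x : ℕ) = iv (x : ℕ) 1 * Q 4 (x : ℕ) := by
  rw [U]
  have h1 : ∀ g1 : ℕ+, ∑' g2 : ℕ+, iv ((g1:ℕ) + (g2:ℕ)) 1 * chE (x : ℕ) ((g1:ℕ) + (g2:ℕ))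
      = iv (x : ℕ) 1 * chE (g1 : ℕ) (x : ℕ) := by
    intro g1
    rw [← KL (g1 : ℕ) x]
    exact tsum_congr fun g2 => by rw [chE_symm]
  rw [tsum_congr fun g1 => by rw [h1 g1]]
  rw [Q, ← ENNReal.tsum_mul_left]
  exact tsum_congr fun g1 => by rw [chE_symm]; ring

/-- the five base depth-2 sums and D, E -/
def AA : ℝ≥0∞ := ∑' a : ℕ+, iv (a:ℕ) 1 * ∑' b : ℕ+, iv ((a:ℕ)+(b:ℕ)) 5
def BB : ℝ≥0∞ := ∑' a : ℕ+, iv (a:ℕ) 2 * ∑' b : ℕ+, iv ((a:ℕ)+(b:ℕ)) 4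
def GG : ℝ≥0∞ := ∑' a : ℕ+, iv (a:ℕ) 3 * ∑' b : ℕ+, iv ((a:ℕ)+(b:ℕ)) 3
def CC : ℝ≥0∞ := ∑' a : ℕ+, iv (a:ℕ) 4 * ∑' b : ℕ+, iv ((a:ℕ)+(b:ℕ)) 2
def ZZ : ℝ≥0∞ := ∑' a : ℕ+, iv (a:ℕ) 6
def DD : ℝ≥0∞ := ∑' a : ℕ+, iv (a:ℕ) 2 * ∑' b : ℕ+, iv ((a:ℕ)+(b:ℕ)) 1 *
  ∑' c : ℕ+, iv ((a:ℕ)+(b:ℕ)+(c:ℕ)) 1 * ∑' d : ℕ+, iv ((a:ℕ)+(b:ℕ)+(c:ℕ)+(d:ℕ)) 2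
def EE : ℝ≥0∞ := ∑' a : ℕ+, iv (a:ℕ) 1 * ∑' b : ℕ+, iv ((a:ℕ)+(b:ℕ)) 1 *
  ∑' c : ℕ+, iv ((a:ℕ)+(b:ℕ)+(c:ℕ)) 1 * ∑' d : ℕ+, iv ((a:ℕ)+(b:ℕ)+(c:ℕ)+(d:ℕ)) 1 *
  ∑' e : ℕ+, iv ((a:ℕ)+(b:ℕ)+(c:ℕ)+(d:ℕ)+(e:ℕ)) 2

lemma duality_CD : CC = DD := by
  have hU2 : CC = U 2 0 := by
    rw [CC, U]
    refine tsum_congr fun g1 => ?_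
    congr 1
    exact tsum_congr fun g2 => by rw [chE_zero_left, mul_one]
  rw [hU2, show (2:ℕ) = 1 + 1 from rfl, UstepA]
  rw [DD]
  refine tsum_congr fun a => ?_
  rw [Nat.zero_add, UstepB, ← mul_assoc, iv_mul]
  congr 1
  rw [show (4:ℕ) = 3 + 1 from rfl, QstepA]
  refine tsum_congr fun b => ?_
  congr 1
  rw [show (3:ℕ) = 2 + 1 from rfl, QstepA]
  refine tsum_congr fun c => ?_
  congr 1
  rw [show (2:ℕ) = 1 + 1 from rfl, QstepA]
  refine tsum_congr fun d => ?_
  have : (a:ℕ) + (b:ℕ) + (c:ℕ) + (d:ℕ) = ((a+b+c+d : ℕ+) : ℕ) := rfl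
  rw [this, Qbase, ← this, iv_mul]

lemma duality_ZE : ZZ = EE := by
  have hQ6 : ZZ = Q 6 0 := by
    rw [ZZ, Q]
    exact tsum_congr fun g => by rw [chE_zero_left, mul_one]
  rw [hQ6, show (6:ℕ) = 5 + 1 from rfl, QstepA, EE]
  refine tsum_congr fun a => ?_
  rw [Nat.zero_add]
  congr 1
  rw [show (5:ℕ) = 4 + 1 from rfl, QstepA]
  refine tsum_congr fun b => ?_
  congr 1
  rw [show (4:ℕ) = 3 + 1 from rfl, QstepA]
  refine tsum_congr fun c => ?_
  congr 1
  rw [show (3:ℕ) = 2 + 1 from rfl, QstepA]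
  refine tsum_congr fun d => ?_
  congr 1
  rw [show (2:ℕ) = 1 + 1 from rfl, QstepA]
  refine tsum_congr fun e => ?_
  have : (a:ℕ) + (b:ℕ) + (c:ℕ) + (d:ℕ) + (e:ℕ) = ((a+b+c+d+e : ℕ+) : ℕ) := rfl
  rw [this, Qbase, ← this, iv_mul]

/-! ### stuffle and Euler decomposition machinery -/

lemma ofm (a b : ℝ) (ha : 0 ≤ a) :
    ENNReal.ofReal a * ENNReal.ofReal b = ENNReal.ofReal (a * b) :=
  (ENNReal.ofReal_mul ha).symm

lemma ofa (a b : ℝ) (ha : 0 ≤ a) (hb : 0 ≤ b) :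
    ENNReal.ofReal a + ENNReal.ofReal b = ENNReal.ofReal (a + b) :=
  (ENNReal.ofReal_add ha hb).symm

lemma coe_add_pnat' (m n : ℕ+) : ((m + n : ℕ+) : ℕ) = (m : ℕ) + (n : ℕ) := rfl

lemma reidxP (m : ℕ+) (h : ℕ+ → ℝ≥0∞) :
    ∑' n : ℕ+, (if m < n then h n else 0) = ∑' y : ℕ+, h (m + y) := by
  have h1 : ∑' n : {n : ℕ+ | m < n}, h n = ∑' n : ℕ+, (if m < n then h n else 0) := by
    rw [tsum_subtype]
    refine tsum_congr fun n => ?_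
    by_cases hn : m < n <;> simp [Set.indicator, hn]
  rw [← h1]
  have mem : ∀ y : ℕ+, m < m + y := fun y => by
    rw [← PNat.coe_lt_coe, coe_add_pnat']
    have h2 : 0 < (y : ℕ) := y.2
    omega
  refine ((Equiv.ofBijective (fun y : ℕ+ => (⟨m + y, mem y⟩ : {n : ℕ+ | m < n}))
      ⟨?_, ?_⟩).tsum_eq (fun n => h n)).symm
  · intro a b hab
    have h2 := congrArg (fun x : {n : ℕ+ | m < n} => ((x : ℕ+) : ℕ)) hab
    simp only [coe_add_pnat'] at h2
    exact PNat.coe_injective (by omega)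
  · rintro ⟨n, hn⟩
    have hn' : (m : ℕ) < (n : ℕ) := (PNat.coe_lt_coe _ _).mpr hn
    refine ⟨⟨(n : ℕ) - (m : ℕ), by omega⟩, ?_⟩
    apply Subtype.ext
    apply PNat.coe_injective
    show (m : ℕ) + ((n : ℕ) - (m : ℕ)) = (n : ℕ)
    omega

lemma split3 (f : ℕ+ → ℕ+ → ℝ≥0∞) :
    ∑' (m : ℕ+) (n : ℕ+), f m n
      = (∑' m : ℕ+, f m m) + (∑' (m : ℕ+) (y : ℕ+), f m (m + y))
        + (∑' (n : ℕ+) (y : ℕ+), f (n + y) n) := by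
  have h1 : ∀ m n : ℕ+, f m n = (if n = m then f m n else 0)
      + (if m < n then f m n else 0) + (if n < m then f m n else 0) := by
    intro m n
    rcases lt_trichotomy m n with h | h | h
    · simp [h, h.ne', h.asymm]
    · subst h; simp
    · simp [h, h.ne, h.asymm]
  calc ∑' (m : ℕ+) (n : ℕ+), f m n
      = ∑' m : ℕ+, ((∑' n : ℕ+, (if n = m then f m n else 0))
          + (∑' n : ℕ+, (if m < n then f m n else 0))
          + (∑' n : ℕ+, (if n < m then f m n else 0))) := by
        refine tsum_congr fun m => ?_
        rw [← ENNReal.tsum_add, ← ENNReal.tsum_add]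
        exact tsum_congr fun n => h1 m n
    _ = (∑' m : ℕ+, f m m) + (∑' (m : ℕ+) (y : ℕ+), f m (m + y))
        + (∑' (m : ℕ+) (n : ℕ+), (if n < m then f m n else 0)) := by
        rw [ENNReal.tsum_add, ENNReal.tsum_add]
        congr 1
        · congr 1
          · refine tsum_congr fun m => ?_
            rw [tsum_eq_single m (fun n hn => if_neg hn)]
            simp
          · exact tsum_congr fun m => reidxP m (f m)
    _ = (∑' m : ℕ+, f m m) + (∑' (m : ℕ+) (y : ℕ+), f m (m + y))
        + (∑' (n : ℕ+) (y : ℕ+), f (n + y) n) := by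
        congr 1
        rw [ENNReal.tsum_comm]
        exact tsum_congr fun n => reidxP n (fun m => f m n)

def zz (k : ℕ) : ℝ≥0∞ := ∑' n : ℕ+, iv (n : ℕ) k

lemma zz_mul (p q : ℕ) : zz p * zz q = ∑' (m : ℕ+) (n : ℕ+), iv (m:ℕ) p * iv (n:ℕ) q := by
  rw [zz, zz, ← ENNReal.tsum_mul_right]
  exact tsum_congr fun m => ENNReal.tsum_mul_left.symm

lemma coe_add_pnat (m n : ℕ+) : ((m + n : ℕ+) : ℕ) = (m : ℕ) + (n : ℕ) := rfl

/-- stuffle ζ3·ζ3 -/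
lemma stuffle33 : zz 3 * zz 3 = ZZ + GG + GG := by
  rw [zz_mul, split3 (fun m n => iv (m:ℕ) 3 * iv (n:ℕ) 3)]
  congr 1
  · congr 1
    · rw [ZZ]
      exact tsum_congr fun m => by rw [iv_mul]
    · rw [GG]
      refine tsum_congr fun m => ?_
      rw [ENNReal.tsum_mul_left]
      exact congrArg _ (tsum_congr fun y => by rw [coe_add_pnat])
  · rw [GG]
    refine tsum_congr fun n => ?_
    rw [← ENNReal.tsum_mul_left]
    refine tsum_congr fun y => ?_
    rw [coe_add_pnat, mul_comm]

/-- stuffle ζ2·ζ4 -/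
lemma stuffle24 : zz 2 * zz 4 = ZZ + BB + CC := by
  rw [zz_mul, split3 (fun m n => iv (m:ℕ) 2 * iv (n:ℕ) 4)]
  congr 1
  · congr 1
    · rw [ZZ]
      exact tsum_congr fun m => by rw [iv_mul]
    · rw [BB]
      refine tsum_congr fun m => ?_
      rw [ENNReal.tsum_mul_left]
      exact congrArg _ (tsum_congr fun y => by rw [coe_add_pnat])
  · rw [CC]
    refine tsum_congr fun n => ?_
    rw [← ENNReal.tsum_mul_left]
    refine tsum_congr fun y => ?_
    rw [coe_add_pnat, mul_comm]

/-! ### Euler decompositions -/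

def SS (p q : ℕ) : ℝ≥0∞ := ∑' a : ℕ+, iv (a:ℕ) p * ∑' b : ℕ+, iv ((a:ℕ)+(b:ℕ)) q

lemma SSd (p q : ℕ) : ∑' (m : ℕ+) (k : ℕ+), iv (m:ℕ) p * iv ((m:ℕ)+(k:ℕ)) q = SS p q :=
  tsum_congr fun _ => ENNReal.tsum_mul_left

lemma SSswap (p q : ℕ) : ∑' (m : ℕ+) (k : ℕ+), iv (k:ℕ) p * iv ((m:ℕ)+(k:ℕ)) q = SS p q := by
  rw [ENNReal.tsum_comm]
  refine tsum_congr fun k => ?_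
  rw [ENNReal.tsum_mul_left]
  exact congrArg _ (tsum_congr fun m => by rw [Nat.add_comm])

lemma SSswap' (p q : ℕ) : ∑' (m : ℕ+) (k : ℕ+), iv ((m:ℕ)+(k:ℕ)) q * iv (k:ℕ) p = SS p q := by
  rw [← SSswap p q]
  exact tsum_congr fun m => tsum_congr fun k => mul_comm _ _

lemma tsum2_add (f g : ℕ+ → ℕ+ → ℝ≥0∞) :
    ∑' (m : ℕ+) (k : ℕ+), (f m k + g m k)
      = (∑' (m : ℕ+) (k : ℕ+), f m k) + ∑' (m : ℕ+) (k : ℕ+), g m k := by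
  rw [← ENNReal.tsum_add]
  exact tsum_congr fun m => ENNReal.tsum_add

lemma tsum2_cmul (c : ℝ≥0∞) (f : ℕ+ → ℕ+ → ℝ≥0∞) :
    ∑' (m : ℕ+) (k : ℕ+), c * f m k = c * ∑' (m : ℕ+) (k : ℕ+), f m k := by
  rw [← ENNReal.tsum_mul_left]
  exact tsum_congr fun m => ENNReal.tsum_mul_left

lemma PF33E (m k : ℕ) (hm : 1 ≤ m) (hk : 1 ≤ k) :
    iv m 3 * iv k 3
      = 6 * (iv m 1 * iv (m+k) 5) + 3 * (iv m 2 * iv (m+k) 4) + iv m 3 * iv (m+k) 3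
        + 6 * (iv k 1 * iv (m+k) 5) + 3 * (iv k 2 * iv (m+k) 4) + iv k 3 * iv (m+k) 3 := by
  have hm' : (0:ℝ) < m := by exact_mod_cast hm
  have hk' : (0:ℝ) < k := by exact_mod_cast hk
  simp only [iv, Nat.cast_add]
  rw [show (6:ℝ≥0∞) = ENNReal.ofReal (6:ℝ) from by simp,
      show (3:ℝ≥0∞) = ENNReal.ofReal (3:ℝ) from by simp]
  repeat rw [ofm _ _ (by positivity)]
  repeat rw [ofa _ _ (by positivity) (by positivity)]
  congr 1
  field_simp
  ring

lemma PF24E (m k : ℕ) (hm : 1 ≤ m) (hk : 1 ≤ k) :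
    iv m 2 * iv k 4
      = 4 * (iv m 1 * iv (m+k) 5) + iv m 2 * iv (m+k) 4
        + 4 * (iv k 1 * iv (m+k) 5) + 3 * (iv k 2 * iv (m+k) 4)
        + 2 * (iv k 3 * iv (m+k) 3) + iv k 4 * iv (m+k) 2 := by
  have hm' : (0:ℝ) < m := by exact_mod_cast hm
  have hk' : (0:ℝ) < k := by exact_mod_cast hk
  simp only [iv, Nat.cast_add]
  rw [show (4:ℝ≥0∞) = ENNReal.ofReal (4:ℝ) from by simp,
      show (3:ℝ≥0∞) = ENNReal.ofReal (3:ℝ) from by simp,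
      show (2:ℝ≥0∞) = ENNReal.ofReal (2:ℝ) from by simp]
  repeat rw [ofm _ _ (by positivity)]
  repeat rw [ofa _ _ (by positivity) (by positivity)]
  congr 1
  field_simp
  ring

lemma euler33 : zz 3 * zz 3 = 6 * SS 1 5 + 3 * SS 2 4 + SS 3 3
    + (6 * SS 1 5 + 3 * SS 2 4 + SS 3 3) := by
  rw [zz_mul]
  have h := tsum_congr (L := SummationFilter.unconditional ℕ+) (fun m : ℕ+ => tsum_congr (L := SummationFilter.unconditional ℕ+) (fun k : ℕ+ =>
    PF33E (m:ℕ) (k:ℕ) m.2 k.2))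
  rw [h, tsum2_add, tsum2_add, tsum2_add, tsum2_add, tsum2_add,
    tsum2_cmul, tsum2_cmul, tsum2_cmul, tsum2_cmul,
    SSd, SSd, SSd, SSswap, SSswap, SSswap]
  ring

lemma euler24 : zz 2 * zz 4 = 8 * SS 1 5 + 4 * SS 2 4 + 2 * SS 3 3 + SS 4 2 := by
  rw [zz_mul]
  have h := tsum_congr (L := SummationFilter.unconditional ℕ+) (fun m : ℕ+ => tsum_congr (L := SummationFilter.unconditional ℕ+) (fun k : ℕ+ =>
    PF24E (m:ℕ) (k:ℕ) m.2 k.2))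
  rw [h, tsum2_add, tsum2_add, tsum2_add, tsum2_add, tsum2_add,
    tsum2_cmul, tsum2_cmul, tsum2_cmul, tsum2_cmul,
    SSd, SSd, SSswap, SSswap, SSswap, SSswap]
  ring

/-! ### sum formula -/

lemma PF5E (m k : ℕ) (hm : 1 ≤ m) (hk : 1 ≤ k) :
    iv m 1 * iv (m+k) 5 + iv m 2 * iv (m+k) 4 + iv m 3 * iv (m+k) 3 + iv m 4 * iv (m+k) 2
      + iv (m+k) 5 * iv k 1 = iv m 4 * (iv (m+k) 1 * iv k 1) := by
  have hm' : (0:ℝ) < m := by exact_mod_cast hm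
  have hk' : (0:ℝ) < k := by exact_mod_cast hk
  simp only [iv, Nat.cast_add]
  repeat rw [ofm _ _ (by positivity)]
  repeat rw [ofa _ _ (by positivity) (by positivity)]
  congr 1
  field_simp
  ring

def WW : ℝ≥0∞ := ∑' (m : ℕ+) (k : ℕ+), iv (m:ℕ) 4 * (iv ((m:ℕ)+(k:ℕ)) 1 * iv (k:ℕ) 1)

lemma sumform_lhs : SS 1 5 + SS 2 4 + SS 3 3 + SS 4 2 + SS 1 5 = WW := by
  have hs : ∑' (m : ℕ+) (k : ℕ+),
      (iv (m:ℕ) 1 * iv ((m:ℕ)+(k:ℕ)) 5 + iv (m:ℕ) 2 * iv ((m:ℕ)+(k:ℕ)) 4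
        + iv (m:ℕ) 3 * iv ((m:ℕ)+(k:ℕ)) 3 + iv (m:ℕ) 4 * iv ((m:ℕ)+(k:ℕ)) 2
        + iv ((m:ℕ)+(k:ℕ)) 5 * iv (k:ℕ) 1) = WW :=
    tsum_congr fun m => tsum_congr fun k => PF5E (m:ℕ) (k:ℕ) m.2 k.2
  rw [tsum2_add, tsum2_add, tsum2_add, tsum2_add, SSd, SSd, SSd, SSd, SSswap'] at hs
  exact hs

lemma harm_partial (m : ℕ) (hm : 1 ≤ m) : ∀ N : ℕ,
    ∑ j ∈ Finset.range N, (((j:ℝ)+1)⁻¹ * ((m:ℝ)+(j:ℝ)+1)⁻¹)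
      = (m:ℝ)⁻¹ * ((∑ i ∈ Finset.range m, ((i:ℝ)+1)⁻¹)
          - ∑ i ∈ Finset.range m, ((N:ℝ)+(i:ℝ)+1)⁻¹)
  | 0 => by simp
  | (N+1) => by
    rw [Finset.sum_range_succ, harm_partial m hm N]
    push_cast
    have hm' : (0:ℝ) < m := by exact_mod_cast hm
    have hdiff : (∑ i ∈ Finset.range m, ((N:ℝ)+(i:ℝ)+1)⁻¹)
        - (∑ i ∈ Finset.range m, ((N:ℝ)+1+(i:ℝ)+1)⁻¹)
        = ((N:ℝ)+1)⁻¹ - ((N:ℝ)+(m:ℝ)+1)⁻¹ := by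
      rw [← Finset.sum_sub_distrib]
      have h1 := Finset.sum_range_sub' (fun i : ℕ => ((N:ℝ)+(i:ℝ)+1)⁻¹) m
      push_cast at h1
      simp only [add_zero] at h1
      rw [← h1]
      refine Finset.sum_congr rfl fun i _ => ?_
      ring_nf
    have step : ((N:ℝ)+1)⁻¹ * ((m:ℝ)+(N:ℝ)+1)⁻¹
        = (m:ℝ)⁻¹ * (((N:ℝ)+1)⁻¹ - ((N:ℝ)+(m:ℝ)+1)⁻¹) := by
      have h2 : (0:ℝ) < (N:ℝ)+1 := by positivity
      have h3 : (0:ℝ) < (N:ℝ)+(m:ℝ)+1 := by positivity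
      rw [show ((m:ℝ)+(N:ℝ)+1) = ((N:ℝ)+(m:ℝ)+1) from by ring,
        inv_sub_inv h2.ne' h3.ne',
        show ((N:ℝ)+(m:ℝ)+1) - ((N:ℝ)+1) = (m:ℝ) from by ring,
        div_eq_mul_inv, ← mul_assoc, inv_mul_cancel₀ hm'.ne', one_mul, mul_inv]
    rw [step, ← hdiff]
    ring

lemma harm_hasSum (m : ℕ+) :
    HasSum (fun j : ℕ => (((j:ℝ)+1)⁻¹ * (((m:ℕ):ℝ)+(j:ℝ)+1)⁻¹))
      ((((m:ℕ):ℝ))⁻¹ * ∑ i ∈ Finset.range (m:ℕ), ((i:ℝ)+1)⁻¹) := by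
  rw [hasSum_iff_tendsto_nat_of_nonneg (fun j => by positivity)]
  have h1 : (fun N : ℕ => ∑ j ∈ Finset.range N, (((j:ℝ)+1)⁻¹ * (((m:ℕ):ℝ)+(j:ℝ)+1)⁻¹))
      = fun N : ℕ => (((m:ℕ):ℝ))⁻¹ * ((∑ i ∈ Finset.range (m:ℕ), ((i:ℝ)+1)⁻¹)
          - ∑ i ∈ Finset.range (m:ℕ), ((N:ℝ)+(i:ℝ)+1)⁻¹) := by
    funext N
    exact harm_partial (m:ℕ) m.2 N
  rw [h1]
  have h2 : Filter.Tendsto (fun N : ℕ => ∑ i ∈ Finset.range (m:ℕ), ((N:ℝ)+(i:ℝ)+1)⁻¹)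
      Filter.atTop (nhds 0) := by
    have h0 : (0:ℝ) = ∑ i ∈ Finset.range (m:ℕ), (0:ℝ) := by simp
    rw [h0]
    refine tendsto_finset_sum _ fun i _ => ?_
    have : Filter.Tendsto (fun N : ℕ => ((N:ℝ) + ((i:ℝ)+1))⁻¹) Filter.atTop (nhds 0) :=
      tendsto_inv_atTop_zero.comp
        (Filter.tendsto_atTop_add_const_right _ _ tendsto_natCast_atTop_atTop)
    exact this.congr fun N => by ring_nf
  have h4 : Filter.Tendsto (fun N : ℕ => (∑ i ∈ Finset.range (m:ℕ), ((i:ℝ)+1)⁻¹)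
      - ∑ i ∈ Finset.range (m:ℕ), ((N:ℝ)+(i:ℝ)+1)⁻¹) Filter.atTop
      (nhds ((∑ i ∈ Finset.range (m:ℕ), ((i:ℝ)+1)⁻¹) - 0)) :=
    Filter.Tendsto.sub tendsto_const_nhds h2
  have h3 := Filter.Tendsto.const_mul ((((m:ℕ):ℝ))⁻¹) h4
  simpa using h3

def HS (m : ℕ+) : ℝ≥0∞ := ENNReal.ofReal (∑ i ∈ Finset.range (m:ℕ), ((i:ℝ)+1)⁻¹)

lemma inner_harm (m : ℕ+) :
    ∑' k : ℕ+, iv ((m:ℕ)+(k:ℕ)) 1 * iv (k:ℕ) 1 = iv (m:ℕ) 1 * HS m := by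
  rw [tsum_pnat]
  have h1 : ∀ n : ℕ, iv ((m:ℕ)+((n.succPNat : ℕ+):ℕ)) 1 * iv (((n.succPNat : ℕ+)):ℕ) 1
      = ENNReal.ofReal (((n:ℝ)+1)⁻¹ * (((m:ℕ):ℝ)+(n:ℝ)+1)⁻¹) := by
    intro n
    have hc : ((n.succPNat : ℕ+):ℕ) = n+1 := rfl
    rw [hc, iv, iv, pow_one, pow_one, ← ENNReal.ofReal_mul (by positivity), mul_comm]
    congr 1
    push_cast
    ring
  rw [tsum_congr h1,
    ← ENNReal.ofReal_tsum_of_nonneg (fun n => by positivity) (harm_hasSum m).summable,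
    (harm_hasSum m).tsum_eq, ENNReal.ofReal_mul (by positivity), HS, iv, pow_one]

lemma iv1 (a : ℕ) : iv a 1 = ENNReal.ofReal (((a:ℝ))⁻¹) := by rw [iv, pow_one]

lemma WAZ : WW = SS 1 5 + ZZ := by
  have h1 : WW = ∑' m : ℕ+, iv (m:ℕ) 5 * HS m := by
    rw [WW]
    refine tsum_congr fun m => ?_
    rw [ENNReal.tsum_mul_left, inner_harm, ← mul_assoc, iv_mul]
  rw [h1, tsum_pnat]
  have h2 : ∀ n : ℕ, iv ((n.succPNat : ℕ+):ℕ) 5 * HS n.succPNat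
      = (∑' i : ℕ, if i < n then iv (n+1) 5 * iv (i+1) 1 else 0) + iv (n+1) 6 := by
    intro n
    have hc : ((n.succPNat : ℕ+):ℕ) = n+1 := rfl
    have hsum : HS n.succPNat = (∑ i ∈ Finset.range n, iv (i+1) 1) + iv (n+1) 1 := by
      rw [HS, hc, Finset.sum_range_succ, ENNReal.ofReal_add (by positivity) (by positivity),
        ENNReal.ofReal_sum_of_nonneg (fun i _ => by positivity)]
      congr 1
      · refine Finset.sum_congr rfl fun i _ => ?_
        rw [iv1]; congr 1; push_cast; ring
      · rw [iv1]; congr 1; push_cast; ring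
    rw [hc, hsum, mul_add, iv_mul, Finset.mul_sum]
    congr 1
    rw [tsum_eq_sum (s := Finset.range n) (fun i hi => if_neg (by simpa using hi))]
    exact (Finset.sum_congr rfl fun i hi => if_pos (by simpa using hi)).symm
  rw [tsum_congr h2, ENNReal.tsum_add]
  congr 1
  · calc ∑' (n : ℕ) (i : ℕ), (if i < n then iv (n+1) 5 * iv (i+1) 1 else 0)
        = ∑' (i : ℕ) (n : ℕ), (if i < n then iv (n+1) 5 * iv (i+1) 1 else 0) :=
          ENNReal.tsum_comm
      _ = ∑' (i : ℕ) (y : ℕ), iv (i+1+y+1) 5 * iv (i+1) 1 :=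
          tsum_congr fun i => reidxN i _
      _ = SS 1 5 := by
          rw [SS, tsum_pnat]
          refine tsum_congr fun i => ?_
          have hc : ((i.succPNat : ℕ+):ℕ) = i+1 := rfl
          rw [hc, tsum_pnat (fun b : ℕ+ => iv ((i+1)+(b:ℕ)) 5), ← ENNReal.tsum_mul_left]
          refine tsum_congr fun y => ?_
          have hc2 : ((y.succPNat : ℕ+):ℕ) = y+1 := rfl
          rw [hc2, mul_comm, show (i+1)+(y+1) = i+1+y+1 from by omega]
  · rw [ZZ, tsum_pnat]
    exact tsum_congr fun n => rfl

/-! ### converting mzv to gap-coordinate sums -/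

/-- Multiple zeta value `ζ(k₁,…,k_r) = Σ_{0<m₁<⋯<m_r} ∏ mᵢ^{-kᵢ}`. -/
noncomputable def mzv (k : List ℕ) : ℝ :=
  ∑' m : {f : Fin k.length → ℕ+ // StrictMono f},
    ∏ i : Fin k.length, ((m.1 i : ℝ) ^ (k.get i))⁻¹

def pS {r : ℕ} (g : Fin r → ℕ+) (i : Fin r) : ℕ :=
  ∑ j : Fin r, if j ≤ i then (g j : ℕ) else 0

lemma pS_pos {r : ℕ} (g : Fin r → ℕ+) (i : Fin r) : 0 < pS g i := by
  refine Finset.sum_pos' (fun j _ => by split <;> omega) ⟨i, Finset.mem_univ i, ?_⟩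
  rw [if_pos le_rfl]
  exact (g i).2

def phi {r : ℕ} (g : Fin r → ℕ+) : {f : Fin r → ℕ+ // StrictMono f} :=
  ⟨fun i => ⟨pS g i, pS_pos g i⟩, by
    intro i i' hii
    have : pS g i < pS g i' := by
      refine Finset.sum_lt_sum (fun j _ => ?_) ⟨i', Finset.mem_univ i', ?_⟩
      · split
        · rw [if_pos (le_trans (by assumption) hii.le)]
        · split <;> omega
      · rw [if_neg (by exact fun hh => absurd (lt_of_le_of_lt hh hii) (lt_irrefl i')),
          if_pos le_rfl]
        exact (g i').2
    exact this⟩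

lemma pS_zero {r : ℕ} (g : Fin r → ℕ+) (i : Fin r) (h : (i : ℕ) = 0) :
    pS g i = (g i : ℕ) := by
  rw [pS]
  have h1 : ∀ j : Fin r, (j ≤ i) = (j = i) := by
    intro j
    have : (j ≤ i) ↔ (j = i) := by
      rw [Fin.le_def, Fin.ext_iff]; omega
    simp [this]
  simp only [h1]
  simp [Finset.sum_ite_eq']

lemma pS_succ {r : ℕ} (g : Fin r → ℕ+) (i : Fin r) (h : (i : ℕ) ≠ 0) :
    pS g i = (g i : ℕ) + pS g ⟨(i : ℕ) - 1, by omega⟩ := by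
  rw [pS, pS,
    show ((g i : ℕ)) = ∑ j : Fin r, (if j = i then (g j : ℕ) else 0) from by
      simp [Finset.sum_ite_eq'],
    ← Finset.sum_add_distrib]
  refine Finset.sum_congr rfl fun j _ => ?_
  have hprev : ((⟨(i : ℕ) - 1, by omega⟩ : Fin r) : ℕ) = (i : ℕ) - 1 := rfl
  have hj : (j ≤ i) ↔ (j = i ∨ j ≤ (⟨(i : ℕ) - 1, by omega⟩ : Fin r)) := by
    rw [Fin.le_def, Fin.ext_iff, Fin.le_def, hprev]
    omega
  by_cases h1 : j = i
  · subst h1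
    rw [if_pos le_rfl, if_pos rfl, if_neg (by rw [Fin.le_def, hprev]; omega)]
    try omega
  · by_cases h2 : j ≤ (⟨(i : ℕ) - 1, by omega⟩ : Fin r)
    · rw [if_pos (hj.2 (Or.inr h2)), if_neg h1, if_pos h2]
      try omega
    · rw [if_neg (fun hh => by rcases hj.1 hh with h3 | h3; exact h1 h3; exact h2 h3),
        if_neg h1, if_neg h2]
      try omega

lemma phi_inj {r : ℕ} : Function.Injective (phi (r := r)) := by
  intro g g' he
  have hv : ∀ i : Fin r, pS g i = pS g' i := by
    intro i
    have h2 := congrArg (fun m : {f : Fin r → ℕ+ // StrictMono f} => ((m.1 i : ℕ+) : ℕ)) he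
    simpa [phi] using h2
  funext i
  by_cases h0 : (i : ℕ) = 0
  · have h3 := hv i
    rw [pS_zero g i h0, pS_zero g' i h0] at h3
    exact PNat.coe_injective h3
  · have h3 := hv i
    rw [pS_succ g i h0, pS_succ g' i h0] at h3
    have h4 := hv ⟨(i : ℕ) - 1, by omega⟩
    exact PNat.coe_injective (by omega)

lemma phi_surj {r : ℕ} : Function.Surjective (phi (r := r)) := by
  rintro ⟨f, hf⟩
  have hlt : ∀ (i : Fin r) (h0 : (i : ℕ) ≠ 0), (f ⟨(i:ℕ)-1, by omega⟩ : ℕ) < (f i : ℕ) := by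
    intro i h0
    have h1 : (⟨(i:ℕ)-1, by omega⟩ : Fin r) < i := by rw [Fin.lt_def]; show (i:ℕ)-1 < i; omega
    exact (PNat.coe_lt_coe _ _).mpr (hf h1)
  refine ⟨fun i => if h0 : (i : ℕ) = 0 then f i
    else ⟨(f i : ℕ) - (f ⟨(i:ℕ)-1, by omega⟩ : ℕ), by have := hlt i h0; omega⟩, ?_⟩
  apply Subtype.ext
  funext i
  apply PNat.coe_injective
  show pS _ i = (f i : ℕ)
  have key : ∀ n : ℕ, ∀ i : Fin r, (i : ℕ) = n →
      pS (fun i => if h0 : (i : ℕ) = 0 then f i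
        else ⟨(f i : ℕ) - (f ⟨(i:ℕ)-1, by omega⟩ : ℕ), by have := hlt i h0; omega⟩) i
        = (f i : ℕ) := by
    intro n
    induction n using Nat.strong_induction_on with
    | _ n ih =>
      intro i hi
      by_cases h0 : (i : ℕ) = 0
      · rw [pS_zero _ i h0]
        exact congrArg PNat.val (dif_pos h0)
      · rw [pS_succ _ i h0, ih ((i:ℕ)-1) (by omega) ⟨(i:ℕ)-1, by omega⟩ rfl]
        erw [dif_neg h0]
        have := hlt i h0
        show (f i : ℕ) - (f ⟨(i:ℕ)-1, by omega⟩ : ℕ) + (f ⟨(i:ℕ)-1, by omega⟩ : ℕ) = (f i : ℕ)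
        omega
  exact key (i : ℕ) i rfl

def phiE {r : ℕ} : (Fin r → ℕ+) ≃ {f : Fin r → ℕ+ // StrictMono f} :=
  Equiv.ofBijective phi ⟨phi_inj, phi_surj⟩

lemma tsum_phi {r : ℕ} (F : {f : Fin r → ℕ+ // StrictMono f} → ℝ≥0∞) :
    ∑' m, F m = ∑' g : Fin r → ℕ+, F (phi g) :=
  ((phiE (r := r)).tsum_eq F).symm

lemma tsum_succ_pi {r : ℕ} (F : (Fin (r+1) → ℕ+) → ℝ≥0∞) :
    ∑' g, F g = ∑' (a : ℕ+), ∑' (t : Fin r → ℕ+), F (Fin.cons a t) := by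
  calc ∑' g, F g = ∑' p : ℕ+ × (Fin r → ℕ+), F (Fin.cons p.1 p.2) :=
        ((Fin.consEquiv (fun _ : Fin (r+1) => ℕ+)).tsum_eq F).symm
    _ = ∑' (a : ℕ+) (t : Fin r → ℕ+), F (Fin.cons a t) := ENNReal.tsum_prod'

lemma tsum_fin0_pi (F : (Fin 0 → ℕ+) → ℝ≥0∞) : ∑' g, F g = F ![] := by
  exact tsum_eq_single ![] (fun b hb => absurd (Subsingleton.elim b ![]) hb)

lemma iv_pow (n : ℕ+) (k : ℕ) : (((n:ℕ) : ℝ≥0∞) ^ k)⁻¹ = iv (n:ℕ) k := by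
  have h0 : (0:ℝ) < ((n:ℕ):ℝ) := by exact_mod_cast n.2
  rw [iv, ← ENNReal.ofReal_natCast, ← ENNReal.ofReal_pow h0.le,
    ENNReal.ofReal_inv_of_pos (by positivity)]

lemma mzv_toReal (k : List ℕ) :
    mzv k = (∑' m : {f : Fin k.length → ℕ+ // StrictMono f},
      ∏ i : Fin k.length, iv ((m.1 i : ℕ+) : ℕ) (k.get i)).toReal := by
  rw [mzv, ENNReal.tsum_toReal_eq (fun m => by
    refine ENNReal.prod_ne_top fun i _ => ?_
    exact iv_ne_top _ _)]
  refine tsum_congr fun m => ?_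
  rw [ENNReal.toReal_prod]
  refine Finset.prod_congr rfl fun i _ => ?_
  rw [iv, ENNReal.toReal_ofReal (by positivity)]

example (a b : ℕ+) :
    (∏ i : Fin 2, iv (((phi (Fin.cons a (Fin.cons b ![])) : {f : Fin 2 → ℕ+ // StrictMono f}).1 i : ℕ+) : ℕ) ([4,2].get i))
      = iv (a:ℕ) 4 * iv ((a:ℕ)+(b:ℕ)) 2 := by
  simp [phi, pS, Fin.prod_univ_two, Fin.sum_univ_two]

lemma mzv_depth2 (p q : ℕ) : mzv [p, q] = (SS p q).toReal := by
  rw [mzv_toReal]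
  congr 1
  have h : (∑' m : {f : Fin 2 → ℕ+ // StrictMono f},
      ∏ i : Fin 2, iv ((m.1 i : ℕ+) : ℕ) ([p, q].get i)) = SS p q := by
    rw [tsum_phi, tsum_succ_pi, SS]
    refine tsum_congr fun a => ?_
    rw [tsum_succ_pi]
    calc ∑' (b : ℕ+) (t : Fin 0 → ℕ+),
          (∏ i : Fin 2, iv (((phi (Fin.cons a (Fin.cons b t))).1 i : ℕ+) : ℕ) ([p, q].get i))
        = ∑' (b : ℕ+), iv (a:ℕ) p * iv ((a:ℕ)+(b:ℕ)) q := by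
          refine tsum_congr fun b => ?_
          rw [tsum_fin0_pi]
          simp [phi, pS, Fin.prod_univ_two, Fin.sum_univ_two]
      _ = iv (a:ℕ) p * ∑' (b : ℕ+), iv ((a:ℕ)+(b:ℕ)) q := ENNReal.tsum_mul_left
  exact h

lemma DD_flat : DD = ∑' (a : ℕ+) (b : ℕ+) (c : ℕ+) (d : ℕ+),
    iv (a:ℕ) 2 * (iv ((a:ℕ)+(b:ℕ)) 1 * (iv ((a:ℕ)+(b:ℕ)+(c:ℕ)) 1
      * iv ((a:ℕ)+(b:ℕ)+(c:ℕ)+(d:ℕ)) 2)) := by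
  rw [DD]
  refine tsum_congr fun a => ?_
  rw [← ENNReal.tsum_mul_left]
  refine tsum_congr fun b => ?_
  rw [← ENNReal.tsum_mul_left, ← ENNReal.tsum_mul_left]
  refine tsum_congr fun c => ?_
  rw [← ENNReal.tsum_mul_left, ← ENNReal.tsum_mul_left, ← ENNReal.tsum_mul_left]

lemma mzv2112 : mzv [2,1,1,2] = DD.toReal := by
  rw [mzv_toReal]
  congr 1
  have h : (∑' m : {f : Fin 4 → ℕ+ // StrictMono f},
      ∏ i : Fin 4, iv ((m.1 i : ℕ+) : ℕ) ([2,1,1,2].get i)) = DD := by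
    rw [tsum_phi, tsum_succ_pi, DD_flat]
    refine tsum_congr fun a => ?_
    rw [tsum_succ_pi]
    refine tsum_congr fun b => ?_
    rw [tsum_succ_pi]
    refine tsum_congr fun c => ?_
    rw [tsum_succ_pi]
    refine tsum_congr fun d => ?_
    rw [tsum_fin0_pi]
    simp [phi, pS, Fin.prod_univ_four, Fin.sum_univ_four, mul_assoc,
      show (Fin.cons a (Fin.cons b (Fin.cons c (Fin.cons d ![]))) : Fin 4 → ℕ+) 2 = c from rfl,
      show (Fin.cons a (Fin.cons b (Fin.cons c (Fin.cons d ![]))) : Fin 4 → ℕ+) 3 = d from rfl,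
      show ((3 : Fin 4) : ℕ) = 3 from rfl, show ((2 : Fin 4) : ℕ) = 2 from rfl]
  exact h

lemma EE_flat : EE = ∑' (a : ℕ+) (b : ℕ+) (c : ℕ+) (d : ℕ+) (e : ℕ+),
    iv (a:ℕ) 1 * (iv ((a:ℕ)+(b:ℕ)) 1 * (iv ((a:ℕ)+(b:ℕ)+(c:ℕ)) 1
      * (iv ((a:ℕ)+(b:ℕ)+(c:ℕ)+(d:ℕ)) 1 * iv ((a:ℕ)+(b:ℕ)+(c:ℕ)+(d:ℕ)+(e:ℕ)) 2))) := by
  rw [EE]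
  refine tsum_congr fun a => ?_
  rw [← ENNReal.tsum_mul_left]
  refine tsum_congr fun b => ?_
  rw [← ENNReal.tsum_mul_left, ← ENNReal.tsum_mul_left]
  refine tsum_congr fun c => ?_
  rw [← ENNReal.tsum_mul_left, ← ENNReal.tsum_mul_left, ← ENNReal.tsum_mul_left]
  refine tsum_congr fun d => ?_
  rw [← ENNReal.tsum_mul_left, ← ENNReal.tsum_mul_left, ← ENNReal.tsum_mul_left,
    ← ENNReal.tsum_mul_left]

lemma mzv11112 : mzv [1,1,1,1,2] = EE.toReal := by
  rw [mzv_toReal]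
  congr 1
  have h : (∑' m : {f : Fin 5 → ℕ+ // StrictMono f},
      ∏ i : Fin 5, iv ((m.1 i : ℕ+) : ℕ) ([1,1,1,1,2].get i)) = EE := by
    rw [tsum_phi, tsum_succ_pi, EE_flat]
    refine tsum_congr fun a => ?_
    rw [tsum_succ_pi]
    refine tsum_congr fun b => ?_
    rw [tsum_succ_pi]
    refine tsum_congr fun c => ?_
    rw [tsum_succ_pi]
    refine tsum_congr fun d => ?_
    rw [tsum_succ_pi]
    refine tsum_congr fun e => ?_
    rw [tsum_fin0_pi]
    simp [phi, pS, Fin.prod_univ_five, Fin.sum_univ_five, mul_assoc,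
      show (Fin.cons a (Fin.cons b (Fin.cons c (Fin.cons d (Fin.cons e ![])))) : Fin 5 → ℕ+) 2 = c from rfl,
      show (Fin.cons a (Fin.cons b (Fin.cons c (Fin.cons d (Fin.cons e ![])))) : Fin 5 → ℕ+) 3 = d from rfl,
      show (Fin.cons a (Fin.cons b (Fin.cons c (Fin.cons d (Fin.cons e ![])))) : Fin 5 → ℕ+) 4 = e from rfl,
      show ((4 : Fin 5) : ℕ) = 4 from rfl, show ((3 : Fin 5) : ℕ) = 3 from rfl,
      show ((2 : Fin 5) : ℕ) = 2 from rfl]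
  exact h

/-! ### finiteness -/

lemma iv_anti (x y k : ℕ) (h : x ≤ y) (hx : 0 < x) : iv y k ≤ iv x k := by
  rw [iv, iv]
  apply ENNReal.ofReal_le_ofReal
  have hx' : (0:ℝ) < x := by exact_mod_cast hx
  have h' : (x:ℝ) ≤ y := by exact_mod_cast h
  exact inv_anti₀ (by positivity) (pow_le_pow_left₀ hx'.le h' k)

lemma iv_exp_anti (n j k : ℕ) (h : j ≤ k) (hn : 1 ≤ n) : iv n k ≤ iv n j := by
  rw [iv, iv]
  apply ENNReal.ofReal_le_ofReal
  have hn' : (1:ℝ) ≤ n := by exact_mod_cast hn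
  exact inv_anti₀ (by positivity) (pow_le_pow_right₀ hn' h)

lemma iv_le_one (n k : ℕ) (hn : 1 ≤ n) : iv n k ≤ 1 := by
  rw [iv, ← ENNReal.ofReal_one]
  apply ENNReal.ofReal_le_ofReal
  have hn' : (1:ℝ) ≤ n := by exact_mod_cast hn
  rw [inv_le_one_iff₀]
  right
  exact one_le_pow₀ hn'

lemma zz2_ne_top : zz 2 ≠ ⊤ := by
  have hK := KL 0 1
  simp only [Nat.zero_add, chE_zero_left, mul_one] at hK
  have hb : zz 2 ≤ 2 * (iv ((1:ℕ+):ℕ) 1) := by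
    rw [← hK, ← ENNReal.tsum_mul_left, zz]
    refine Summable.tsum_le_tsum (fun j => ?_) ENNReal.summable ENNReal.summable
    have h1 : iv (j:ℕ) 1 * chE (j:ℕ) ((1:ℕ+):ℕ)
        = ENNReal.ofReal ((((j:ℕ):ℝ))⁻¹ * ((((j:ℕ):ℝ))+1)⁻¹) := by
      rw [iv, chE, pow_one, ← ENNReal.ofReal_mul (by positivity)]
      congr 2
      have hch : ((j:ℕ) + ((1:ℕ+):ℕ)).choose ((1:ℕ+):ℕ) = (j:ℕ)+1 := by
        rw [show ((1:ℕ+):ℕ) = 1 from rfl, Nat.choose_one_right]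
      rw [hch]
      push_cast
      ring
    rw [h1, iv, show (2:ℝ≥0∞) = ENNReal.ofReal (2:ℝ) from by simp,
      ← ENNReal.ofReal_mul (by norm_num)]
    apply ENNReal.ofReal_le_ofReal
    have hj : (1:ℝ) ≤ ((j:ℕ):ℝ) := by exact_mod_cast j.2
    rw [pow_two, mul_inv,
      show 2*((((j:ℕ):ℝ))⁻¹*((((j:ℕ):ℝ))+1)⁻¹)
        = (((j:ℕ):ℝ))⁻¹*(2*((((j:ℕ):ℝ))+1)⁻¹) from by ring]
    refine mul_le_mul_of_nonneg_left ?_ (by positivity)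
    rw [show (((j:ℕ):ℝ))⁻¹ = 1/((j:ℕ):ℝ) from by ring,
      show 2*((((j:ℕ):ℝ))+1)⁻¹ = 2/(((j:ℕ):ℝ)+1) from by ring,
      div_le_div_iff₀ (by positivity) (by positivity)]
    linarith
  exact ne_top_of_le_ne_top (ENNReal.mul_ne_top (by simp) (iv_ne_top _ _)) hb

lemma zz_ne_top (k : ℕ) (hk : 2 ≤ k) : zz k ≠ ⊤ := by
  refine ne_top_of_le_ne_top zz2_ne_top ?_
  rw [zz, zz]
  exact Summable.tsum_le_tsum (fun n => iv_exp_anti (n:ℕ) 2 k hk n.2) ENNReal.summable ENNReal.summable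

lemma SS_ne_top (p q : ℕ)
    (hpt : ∀ a b : ℕ+, iv (a:ℕ) p * iv ((a:ℕ)+(b:ℕ)) q ≤ iv (a:ℕ) 2 * iv (b:ℕ) 2) :
    SS p q ≠ ⊤ := by
  refine ne_top_of_le_ne_top (ENNReal.mul_ne_top zz2_ne_top zz2_ne_top) ?_
  rw [← SSd, zz_mul]
  exact Summable.tsum_le_tsum
    (fun a => Summable.tsum_le_tsum (fun b => hpt a b) ENNReal.summable ENNReal.summable)
    ENNReal.summable ENNReal.summable

lemma pnat_cast_pos (a : ℕ+) : 0 < ((a:ℕ):ℕ) := a.2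
lemma pnat_le_add (a b : ℕ+) : (a:ℕ) ≤ (a:ℕ)+(b:ℕ) := Nat.le_add_right _ _
lemma pnat_le_add' (a b : ℕ+) : (b:ℕ) ≤ (a:ℕ)+(b:ℕ) := Nat.le_add_left _ _
lemma pnat_add_one_le (a b : ℕ+) : 1 ≤ (a:ℕ)+(b:ℕ) := le_trans a.2 (pnat_le_add a b)

lemma hA_fin : SS 1 5 ≠ ⊤ := by
  refine SS_ne_top 1 5 fun a b => ?_
  have e1 : iv ((a:ℕ)+(b:ℕ)) 5
      = iv ((a:ℕ)+(b:ℕ)) 1 * (iv ((a:ℕ)+(b:ℕ)) 2 * iv ((a:ℕ)+(b:ℕ)) 2) := by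
    rw [iv_mul, iv_mul]
  rw [e1]
  calc iv (a:ℕ) 1 * (iv ((a:ℕ)+(b:ℕ)) 1 * (iv ((a:ℕ)+(b:ℕ)) 2 * iv ((a:ℕ)+(b:ℕ)) 2))
      ≤ iv (a:ℕ) 1 * (iv (a:ℕ) 1 * (iv (b:ℕ) 2 * 1)) := by
        refine mul_le_mul' le_rfl (mul_le_mul' ?_ (mul_le_mul' ?_ ?_))
        · exact iv_anti _ _ 1 (pnat_le_add a b) a.2
        · exact iv_anti _ _ 2 (pnat_le_add' a b) b.2
        · exact iv_le_one _ 2 (pnat_add_one_le a b)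
    _ = iv (a:ℕ) 2 * iv (b:ℕ) 2 := by
        rw [mul_one, ← mul_assoc, iv_mul]

lemma SS_ne_top_ge2 (p q : ℕ) (hp : 2 ≤ p) (hq : 2 ≤ q) : SS p q ≠ ⊤ := by
  refine SS_ne_top p q fun a b => ?_
  refine mul_le_mul' (iv_exp_anti (a:ℕ) 2 p hp a.2) ?_
  exact le_trans (iv_exp_anti _ 2 q hq (pnat_add_one_le a b))
    (iv_anti _ _ 2 (pnat_le_add' a b) b.2)

theorem mzv_rel_18 :
    24 * mzv [1,5] = 12 * mzv [2,1,1,2] - 7 * mzv [1,1,1,1,2] ∧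
    -4 * mzv [2,4] - 4 * mzv [2,1,1,2] + 3 * mzv [1,1,1,1,2] = 0 ∧
    mzv [4,2] = mzv [2,1,1,2] := by
  have hA : SS 1 5 ≠ ⊤ := hA_fin
  have hB : SS 2 4 ≠ ⊤ := SS_ne_top_ge2 2 4 (by norm_num) (by norm_num)
  have hG : SS 3 3 ≠ ⊤ := SS_ne_top_ge2 3 3 (by norm_num) (by norm_num)
  have hC : SS 4 2 ≠ ⊤ := SS_ne_top_ge2 4 2 (by norm_num) (by norm_num)
  have hZ : ZZ ≠ ⊤ := zz_ne_top 6 (by norm_num)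
  have h6 : (6:ℝ≥0∞) ≠ ⊤ := by simp
  have h3 : (3:ℝ≥0∞) ≠ ⊤ := by simp
  have h8 : (8:ℝ≥0∞) ≠ ⊤ := by simp
  have h4 : (4:ℝ≥0∞) ≠ ⊤ := by simp
  have h2 : (2:ℝ≥0∞) ≠ ⊤ := by simp
  have h6A : 6 * SS 1 5 ≠ ⊤ := ENNReal.mul_ne_top h6 hA
  have h3B : 3 * SS 2 4 ≠ ⊤ := ENNReal.mul_ne_top h3 hB
  have h8A : 8 * SS 1 5 ≠ ⊤ := ENNReal.mul_ne_top h8 hA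
  have h4B : 4 * SS 2 4 ≠ ⊤ := ENNReal.mul_ne_top h4 hB
  have h2G : 2 * SS 3 3 ≠ ⊤ := ENNReal.mul_ne_top h2 hG
  have hX : 6 * SS 1 5 + 3 * SS 2 4 ≠ ⊤ := ENNReal.add_ne_top.2 ⟨h6A, h3B⟩
  have hX2 : 6 * SS 1 5 + 3 * SS 2 4 + SS 3 3 ≠ ⊤ := ENNReal.add_ne_top.2 ⟨hX, hG⟩
  have hY : 8 * SS 1 5 + 4 * SS 2 4 ≠ ⊤ := ENNReal.add_ne_top.2 ⟨h8A, h4B⟩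
  have hY2 : 8 * SS 1 5 + 4 * SS 2 4 + 2 * SS 3 3 ≠ ⊤ := ENNReal.add_ne_top.2 ⟨hY, h2G⟩
  have hS12 : SS 1 5 + SS 2 4 ≠ ⊤ := ENNReal.add_ne_top.2 ⟨hA, hB⟩
  have hS123 : SS 1 5 + SS 2 4 + SS 3 3 ≠ ⊤ := ENNReal.add_ne_top.2 ⟨hS12, hG⟩
  have hS1234 : SS 1 5 + SS 2 4 + SS 3 3 + SS 4 2 ≠ ⊤ := ENNReal.add_ne_top.2 ⟨hS123, hC⟩
  have H1 : ZZ + GG + GG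
      = 6 * SS 1 5 + 3 * SS 2 4 + SS 3 3 + (6 * SS 1 5 + 3 * SS 2 4 + SS 3 3) :=
    stuffle33.symm.trans euler33
  have H2 : ZZ + BB + CC = 8 * SS 1 5 + 4 * SS 2 4 + 2 * SS 3 3 + SS 4 2 :=
    stuffle24.symm.trans euler24
  have H3 : SS 1 5 + SS 2 4 + SS 3 3 + SS 4 2 + SS 1 5 = SS 1 5 + ZZ :=
    sumform_lhs.trans WAZ
  have hGGe : GG = SS 3 3 := rfl
  have hBBe : BB = SS 2 4 := rfl
  have hCCe : CC = SS 4 2 := rfl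
  rw [hGGe] at H1
  rw [hBBe, hCCe] at H2
  have r1 := congrArg ENNReal.toReal H1
  rw [ENNReal.toReal_add (ENNReal.add_ne_top.2 ⟨hZ, hG⟩) hG,
    ENNReal.toReal_add hZ hG, ENNReal.toReal_add hX2 hX2, ENNReal.toReal_add hX hG,
    ENNReal.toReal_add h6A h3B, ENNReal.toReal_mul, ENNReal.toReal_mul] at r1
  simp only [ENNReal.toReal_ofNat] at r1
  have r2 := congrArg ENNReal.toReal H2
  rw [ENNReal.toReal_add (ENNReal.add_ne_top.2 ⟨hZ, hB⟩) hC,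
    ENNReal.toReal_add hZ hB, ENNReal.toReal_add hY2 hC, ENNReal.toReal_add hY h2G,
    ENNReal.toReal_add h8A h4B, ENNReal.toReal_mul, ENNReal.toReal_mul,
    ENNReal.toReal_mul] at r2
  simp only [ENNReal.toReal_ofNat] at r2
  have r3 := congrArg ENNReal.toReal H3
  rw [ENNReal.toReal_add hS1234 hA, ENNReal.toReal_add hS123 hC,
    ENNReal.toReal_add hS12 hG, ENNReal.toReal_add hA hB,
    ENNReal.toReal_add hA hZ] at r3
  have hDC : mzv [2,1,1,2] = (SS 4 2).toReal := by
    rw [mzv2112]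
    exact (congrArg ENNReal.toReal duality_CD).symm
  have hEZ : mzv [1,1,1,1,2] = ZZ.toReal := by
    rw [mzv11112]
    exact (congrArg ENNReal.toReal duality_ZE).symm
  refine ⟨?_, ?_, ?_⟩
  · rw [mzv_depth2 1 5, hDC, hEZ]
    linarith [r1, r2, r3]
  · rw [mzv_depth2 2 4, hDC, hEZ]
    linarith [r1, r2, r3]
  · rw [mzv_depth2 4 2, hDC]
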